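/- Let σ : ℝ² → ℝ be defined by σ(x,y) = exp((x³+y³)/3), and let P be the symmetric 2-tensor on ℝ² with components P₁₁ = y - x + y⁴/2 - x⁴/2, P₁₂ = P₂₁ = -x²y², P₂₂ = x - y + x⁴/2 - y⁴/2. Then the trace-free part of the Hessian of σ plus P·σ vanishes; explicitly, ∂₁∂₁σ + P₁₁σ = ∂₂∂₂σ + P₂₂σ and ∂₁∂₂σ + P₁₂σ = 0 everywhere on ℝ². -/

import Mathlib

/-- First partial derivative (w.r.t. the first coordinate) of a function on ℝ². -/
noncomputable def pd1 (f : ℝ → ℝ → ℝ) (x y : ℝ) : ℝ := deriv (fun t => f t y) x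
/-- Second partial derivative (w.r.t. the second coordinate) of a function on ℝ². -/
noncomputable def pd2 (f : ℝ → ℝ → ℝ) (x y : ℝ) : ℝ := deriv (fun t => f x t) y

lemma hd_exp (y x : ℝ) :
    HasDerivAt (fun t : ℝ => Real.exp ((t ^ 3 + y ^ 3) / 3))
      (x ^ 2 * Real.exp ((x ^ 3 + y ^ 3) / 3)) x := by
  have h1 : HasDerivAt (fun t : ℝ => (t ^ 3 + y ^ 3) / 3) (x ^ 2) x := by
    have : HasDerivAt (fun t : ℝ => t ^ 3 + y ^ 3) (3 * x ^ 2) x := by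
      simpa using ((hasDerivAt_pow 3 x).add_const (y ^ 3))
    have := this.div_const 3
    exact this.congr_deriv (by ring)
  exact ((Real.hasDerivAt_exp ((x ^ 3 + y ^ 3) / 3)).comp x h1).congr_deriv (mul_comm _ _)

lemma hd_exp' (a y : ℝ) :
    HasDerivAt (fun t : ℝ => Real.exp ((a ^ 3 + t ^ 3) / 3))
      (y ^ 2 * Real.exp ((a ^ 3 + y ^ 3) / 3)) y := by
  have := hd_exp a y
  simpa [add_comm] using this

lemma hd_sq (c y x : ℝ) :
    HasDerivAt (fun t : ℝ => t ^ 2 * Real.exp ((t ^ 3 + y ^ 3) / 3))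
      ((2 * x + x ^ 4) * Real.exp ((x ^ 3 + y ^ 3) / 3)) x := by
  have h := (hasDerivAt_pow 2 x).mul (hd_exp y x)
  exact h.congr_deriv (by norm_num; ring)

theorem stmt0
    (σ P11 P12 P22 : ℝ → ℝ → ℝ)
    (hσ : σ = fun x y => Real.exp ((x ^ 3 + y ^ 3) / 3))
    (hP11 : P11 = fun x y => y - x + y ^ 4 / 2 - x ^ 4 / 2)
    (hP12 : P12 = fun x y => -(x ^ 2 * y ^ 2))
    (hP22 : P22 = fun x y => x - y + x ^ 4 / 2 - y ^ 4 / 2) :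
    ∀ x y : ℝ,
      pd1 (pd1 σ) x y + P11 x y * σ x y = pd2 (pd2 σ) x y + P22 x y * σ x y ∧
      pd1 (pd2 σ) x y + P12 x y * σ x y = 0 := by
  subst hσ hP11 hP12 hP22
  intro x y
  have e1 : pd1 (fun x y => Real.exp ((x ^ 3 + y ^ 3) / 3))
      = fun x y => x ^ 2 * Real.exp ((x ^ 3 + y ^ 3) / 3) := by
    funext a b; exact (hd_exp b a).deriv
  have e2 : pd2 (fun x y => Real.exp ((x ^ 3 + y ^ 3) / 3))
      = fun x y => y ^ 2 * Real.exp ((x ^ 3 + y ^ 3) / 3) := by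
    funext a b; exact (hd_exp' a b).deriv
  have e11 : pd1 (pd1 (fun x y => Real.exp ((x ^ 3 + y ^ 3) / 3))) x y
      = (2 * x + x ^ 4) * Real.exp ((x ^ 3 + y ^ 3) / 3) := by
    rw [e1]; exact (hd_sq 0 y x).deriv
  have e22 : pd2 (pd2 (fun x y => Real.exp ((x ^ 3 + y ^ 3) / 3))) x y
      = (2 * y + y ^ 4) * Real.exp ((x ^ 3 + y ^ 3) / 3) := by
    rw [e2]
    show deriv (fun t => t ^ 2 * Real.exp ((x ^ 3 + t ^ 3) / 3)) y = _
    have h := (hasDerivAt_pow 2 y).mul (hd_exp' x y)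
    have := h.deriv
    exact this.trans (by norm_num; ring)
  have e12 : pd1 (pd2 (fun x y => Real.exp ((x ^ 3 + y ^ 3) / 3))) x y
      = x ^ 2 * y ^ 2 * Real.exp ((x ^ 3 + y ^ 3) / 3) := by
    rw [e2]
    show deriv (fun t => y ^ 2 * Real.exp ((t ^ 3 + y ^ 3) / 3)) x = _
    have := ((hd_exp y x).const_mul (y ^ 2)).deriv
    rw [this]; ring
  refine ⟨?_, ?_⟩
  · rw [e11, e22]; ring
  · rw [e12]; ring
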